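/- The separating Noether number of the cyclic group C_4 over ℚ equals 4. -/

import Mathlib

open MvPolynomial Matrix


noncomputable def linPoly {n : ℕ} (b : Fin n → ℚ) : MvPolynomial (Fin n) ℚ :=
  ∑ j, C (b j) * X j

lemma eval_linPoly {n : ℕ} (b u : Fin n → ℚ) : eval u (linPoly b) = b ⬝ᵥ u := by
  simp [linPoly, dotProduct]

lemma linPoly_ne_zero {n : ℕ} {b : Fin n → ℚ} (hb : b ≠ 0) : linPoly b ≠ 0 := by
  obtain ⟨j, hj⟩ := Function.ne_iff.mp hb
  intro h
  apply hj
  have := congrArg (eval (Pi.single j 1)) h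
  rwa [eval_linPoly, map_zero, dotProduct_single, mul_one] at this

lemma totalDegree_linPoly {n : ℕ} (b : Fin n → ℚ) : (linPoly b).totalDegree ≤ 1 := by
  refine (totalDegree_finset_sum _ _).trans ?_
  refine Finset.sup_le fun j _ => ?_
  refine (totalDegree_mul _ _).trans ?_
  simp [totalDegree_X]

lemma upper (n : ℕ) (ρ : Multiplicative (ZMod 4) →* Matrix (Fin n) (Fin n) ℚ)
    (v w : Fin n → ℚ) (hvw : ¬ ∃ g, (ρ g).mulVec v = w) :
    ∃ f : MvPolynomial (Fin n) ℚ,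
      (∀ g (u : Fin n → ℚ), eval ((ρ g).mulVec u) f = eval u f) ∧
      f.totalDegree ≤ 4 ∧ eval v f ≠ eval w f := by
  have horb : ∀ g, v - (ρ g).mulVec w ≠ 0 := by
    intro g hg
    refine hvw ⟨g⁻¹, ?_⟩
    have hv : v = (ρ g).mulVec w := by rwa [sub_eq_zero] at hg
    rw [hv, Matrix.mulVec_mulVec, ← _root_.map_mul ρ, inv_mul_cancel, _root_.map_one ρ, Matrix.one_mulVec]
  set d : Multiplicative (ZMod 4) → (Fin n → ℚ) := fun g => v - (ρ g).mulVec w with hd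
  have hQ : (∏ g, linPoly (d g)) ≠ 0 :=
    Finset.prod_ne_zero_iff.mpr fun g _ => linPoly_ne_zero (horb g)
  obtain ⟨a, ha⟩ : ∃ a, eval a (∏ g, linPoly (d g)) ≠ 0 := by
    by_contra h
    push_neg at h
    exact hQ (MvPolynomial.funext (q := 0) fun x => by simpa using h x)
  have ha' : ∀ g, a ⬝ᵥ v - a ⬝ᵥ (ρ g).mulVec w ≠ 0 := by
    intro g hg
    apply ha
    rw [map_prod]
    refine Finset.prod_eq_zero (Finset.mem_univ g) ?_
    rw [eval_linPoly, hd]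
    rw [dotProduct_comm, dotProduct_sub]
    exact hg
  refine ⟨∏ g, (C (a ⬝ᵥ v) - linPoly (vecMul a (ρ g))), ?_, ?_, ?_⟩
  · intro h u
    rw [map_prod, map_prod]
    have key : ∀ x u', eval u' (C (a ⬝ᵥ v) - linPoly (vecMul a (ρ x)))
        = a ⬝ᵥ v - a ⬝ᵥ (ρ x).mulVec u' := by
      intro x u'
      rw [map_sub, eval_C, eval_linPoly, dotProduct_mulVec]
    calc ∏ g, eval ((ρ h).mulVec u) (C (a ⬝ᵥ v) - linPoly (vecMul a (ρ g)))
        = ∏ g, (a ⬝ᵥ v - a ⬝ᵥ (ρ (g * h)).mulVec u) := by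
          refine Finset.prod_congr rfl fun g _ => ?_
          rw [key, _root_.map_mul ρ, ← Matrix.mulVec_mulVec]
      _ = ∏ g, (a ⬝ᵥ v - a ⬝ᵥ (ρ g).mulVec u) := by
          exact Fintype.prod_equiv (Equiv.mulRight h) _ _ (fun g => rfl)
      _ = ∏ g, eval u (C (a ⬝ᵥ v) - linPoly (vecMul a (ρ g))) := by
          refine Finset.prod_congr rfl fun g _ => (key g u).symm
  · refine (totalDegree_finset_prod _ _).trans ?_
    have hfac : ∀ g : Multiplicative (ZMod 4),
        (C (a ⬝ᵥ v) - linPoly (vecMul a (ρ g))).totalDegree ≤ 1 := by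
      intro g
      rw [sub_eq_add_neg]
      refine (totalDegree_add _ _).trans ?_
      simp only [totalDegree_neg, totalDegree_C]
      simpa using totalDegree_linPoly (vecMul a (ρ g))
    have h1 : ∑ g, (C (a ⬝ᵥ v) - linPoly (vecMul a (ρ g))).totalDegree
        ≤ ∑ _g : Multiplicative (ZMod 4), (1:ℕ) := Finset.sum_le_sum fun g _ => hfac g
    exact h1.trans (by simp)
  · have hv0 : eval v (∏ g, (C (a ⬝ᵥ v) - linPoly (vecMul a (ρ g)))) = 0 := by
      rw [map_prod]
      refine Finset.prod_eq_zero (Finset.mem_univ 1) ?_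
      rw [map_sub, eval_C, eval_linPoly, _root_.map_one ρ, Matrix.vecMul_one, sub_self]
    rw [hv0]
    intro h0
    have hw : eval w (∏ g, (C (a ⬝ᵥ v) - linPoly (vecMul a (ρ g)))) ≠ 0 := by
      rw [map_prod]
      refine Finset.prod_ne_zero_iff.mpr fun g _ => ?_
      rw [map_sub, eval_C, eval_linPoly, ← dotProduct_mulVec]
      exact ha' g
    exact hw h0.symm



def P : Matrix (Fin 4) (Fin 4) ℚ := !![0,1,0,0; 0,0,1,0; 0,0,0,1; 1,0,0,0]

lemma P_mulVec (x : Fin 4 → ℚ) : P.mulVec x = ![x 1, x 2, x 3, x 0] := by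
  funext i
  fin_cases i <;> simp [P, Matrix.mulVec, dotProduct, Fin.sum_univ_four]

lemma P4 : P ^ 4 = 1 := by
  ext i j
  fin_cases i <;> fin_cases j <;>
    norm_num [P, pow_succ, Matrix.mul_apply, Fin.sum_univ_four, Matrix.one_apply, Matrix.vecHead, Matrix.vecTail, Fin.ext_iff, Matrix.cons_val_two, Matrix.cons_val_three]

lemma P_pow_mod (m : ℕ) : P ^ (m % 4) = P ^ m := by
  conv_rhs => rw [← Nat.div_add_mod m 4]
  rw [pow_add, pow_mul, P4, one_pow, one_mul]

def ρ₀ : Multiplicative (ZMod 4) →* Matrix (Fin 4) (Fin 4) ℚ where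
  toFun g := P ^ (Multiplicative.toAdd g).val
  map_one' := by
    show P ^ (0 : ZMod 4).val = 1
    simp [ZMod.val_zero]
  map_mul' g h := by
    show P ^ ((Multiplicative.toAdd g + Multiplicative.toAdd h).val) = _
    rw [ZMod.val_add, P_pow_mod, pow_add]

lemma rho_apply (g : Multiplicative (ZMod 4)) : ρ₀ g = P ^ (Multiplicative.toAdd g).val := rfl

lemma numlem (a b c d : ℕ) (h : a + b + c + d ≤ 3) :
    (3:ℚ)^a * 4^b * (-3)^c * (-4)^d + 4^a * (-3)^b * (-4)^c * 3^d
      + (-3)^a * (-4)^b * 3^c * 4^d + (-4)^a * 3^b * 4^c * (-3)^d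
    = (5:ℚ)^a * 0^b * (-5)^c * 0^d + 0^a * (-5)^b * 0^c * 5^d
      + (-5)^a * 0^b * 5^c * 0^d + 0^a * 5^b * 0^c * (-5)^d := by
  have ha : a ≤ 3 := by omega
  have hb : b ≤ 3 := by omega
  have hc : c ≤ 3 := by omega
  have hd : d ≤ 3 := by omega
  interval_cases a <;> interval_cases b <;> interval_cases c <;> interval_cases d <;>
    first
      | (exfalso; omega)
      | norm_num

def vv0 : Fin 4 → ℚ := ![3,4,-3,-4]
def vv1 : Fin 4 → ℚ := ![4,-3,-4,3]
def vv2 : Fin 4 → ℚ := ![-3,-4,3,4]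
def vv3 : Fin 4 → ℚ := ![-4,3,4,-3]
def ww0 : Fin 4 → ℚ := ![5,0,-5,0]
def ww1 : Fin 4 → ℚ := ![0,-5,0,5]
def ww2 : Fin 4 → ℚ := ![-5,0,5,0]
def ww3 : Fin 4 → ℚ := ![0,5,0,-5]

lemma hPv0 : P *ᵥ vv0 = vv1 := by
  rw [P_mulVec]; funext i; fin_cases i <;> norm_num [vv0, vv1, Matrix.cons_val_two, Matrix.cons_val_three]
lemma hPv1 : P *ᵥ vv1 = vv2 := by
  rw [P_mulVec]; funext i; fin_cases i <;> norm_num [vv1, vv2, Matrix.cons_val_two, Matrix.cons_val_three]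
lemma hPv2 : P *ᵥ vv2 = vv3 := by
  rw [P_mulVec]; funext i; fin_cases i <;> norm_num [vv2, vv3, Matrix.cons_val_two, Matrix.cons_val_three]
lemma hPw0 : P *ᵥ ww0 = ww1 := by
  rw [P_mulVec]; funext i; fin_cases i <;> norm_num [ww0, ww1, Matrix.cons_val_two, Matrix.cons_val_three]
lemma hPw1 : P *ᵥ ww1 = ww2 := by
  rw [P_mulVec]; funext i; fin_cases i <;> norm_num [ww1, ww2, Matrix.cons_val_two, Matrix.cons_val_three]
lemma hPw2 : P *ᵥ ww2 = ww3 := by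
  rw [P_mulVec]; funext i; fin_cases i <;> norm_num [ww2, ww3, Matrix.cons_val_two, Matrix.cons_val_three]

lemma hv0 : (P ^ 0) *ᵥ vv0 = vv0 := by simp
lemma hv1 : (P ^ 1) *ᵥ vv0 = vv1 := by rw [pow_one]; exact hPv0
lemma hv2 : (P ^ 2) *ᵥ vv0 = vv2 := by
  rw [pow_succ, ← Matrix.mulVec_mulVec, hPv0, pow_one, hPv1]
lemma hv3 : (P ^ 3) *ᵥ vv0 = vv3 := by
  rw [pow_succ, ← Matrix.mulVec_mulVec, hPv0, pow_succ, ← Matrix.mulVec_mulVec, hPv1, pow_one, hPv2]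
lemma hw0 : (P ^ 0) *ᵥ ww0 = ww0 := by simp
lemma hw1 : (P ^ 1) *ᵥ ww0 = ww1 := by rw [pow_one]; exact hPw0
lemma hw2 : (P ^ 2) *ᵥ ww0 = ww2 := by
  rw [pow_succ, ← Matrix.mulVec_mulVec, hPw0, pow_one, hPw1]
lemma hw3 : (P ^ 3) *ᵥ ww0 = ww3 := by
  rw [pow_succ, ← Matrix.mulVec_mulVec, hPw0, pow_succ, ← Matrix.mulVec_mulVec, hPw1, pow_one, hPw2]

lemma keymono (s : Fin 4 →₀ ℕ) (hs : (s.sum fun _ e => e) ≤ 3) (c : ℚ) :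
    c * (s.prod fun i e => vv0 i ^ e) + c * (s.prod fun i e => vv1 i ^ e)
      + c * (s.prod fun i e => vv2 i ^ e) + c * (s.prod fun i e => vv3 i ^ e)
    = c * (s.prod fun i e => ww0 i ^ e) + c * (s.prod fun i e => ww1 i ^ e)
      + c * (s.prod fun i e => ww2 i ^ e) + c * (s.prod fun i e => ww3 i ^ e) := by
  have hsum : s 0 + s 1 + s 2 + s 3 ≤ 3 := by
    rwa [Finsupp.sum_fintype _ _ (fun _ => rfl), Fin.sum_univ_four] at hs
  simp only [Finsupp.prod_pow, Fin.prod_univ_four, vv0, vv1, vv2, vv3, ww0, ww1, ww2, ww3,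
    Matrix.cons_val_zero, Matrix.cons_val_one, Matrix.head_cons, Matrix.cons_val_two,
    Matrix.cons_val_three, Matrix.tail_cons, Matrix.head_fin_const]
  have := numlem (s 0) (s 1) (s 2) (s 3) hsum
  linear_combination c * this


lemma notorb : ¬ ∃ g, (ρ₀ g).mulVec vv0 = ww0 := by
  rintro ⟨g, hg⟩
  obtain ⟨k, hk, hgk⟩ : ∃ k, k < 4 ∧ ρ₀ g = P ^ k := ⟨_, ZMod.val_lt _, rfl⟩
  rw [hgk] at hg
  interval_cases k
  · rw [hv0] at hg; have := congrFun hg 0; norm_num [vv0, ww0] at this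
  · rw [hv1] at hg; have := congrFun hg 0; norm_num [vv1, ww0] at this
  · rw [hv2] at hg; have := congrFun hg 0; norm_num [vv2, ww0] at this
  · rw [hv3] at hg; have := congrFun hg 0; norm_num [vv3, ww0] at this

/-- `SepByDeg n d ρ` : the polynomial invariants of degree at most `d` of the
`n`-dimensional rational representation `ρ` of the cyclic group `C₄` separate its orbits. -/
def SepByDeg (n d : ℕ) (ρ : Multiplicative (ZMod 4) →* Matrix (Fin n) (Fin n) ℚ) : Prop :=
  ∀ v w : Fin n → ℚ, (¬ ∃ g, (ρ g).mulVec v = w) →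
    ∃ f : MvPolynomial (Fin n) ℚ,
      (∀ g (u : Fin n → ℚ), eval ((ρ g).mulVec u) f = eval u f) ∧
      f.totalDegree ≤ d ∧ eval v f ≠ eval w f

/-- The separating Noether number of `C₄` over `ℚ` equals `4`. -/
theorem sepNoetherNumber_Q_C4 :
    (∀ (n : ℕ) (ρ : Multiplicative (ZMod 4) →* Matrix (Fin n) (Fin n) ℚ)
        (hρ : ∀ g, IsUnit (ρ g)), SepByDeg n 4 ρ) ∧
    ¬ (∀ (n : ℕ) (ρ : Multiplicative (ZMod 4) →* Matrix (Fin n) (Fin n) ℚ)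
        (hρ : ∀ g, IsUnit (ρ g)), SepByDeg n 3 ρ) := by
  constructor
  · intro n ρ _ v w hvw
    exact upper n ρ v w hvw
  · intro H
    obtain ⟨f, hinv, hdeg, hne⟩ :=
      H 4 ρ₀ (fun g => (Group.isUnit g).map ρ₀) vv0 ww0 notorb
    apply hne
    have key : ∀ (k : ℕ) (u z : Fin 4 → ℚ), (P ^ k) *ᵥ u = z → eval z f = eval u f := by
      intro k u z hz
      have h : (ρ₀ (Multiplicative.ofAdd ((k : ℕ) : ZMod 4))) = P ^ k := by
        rw [rho_apply, toAdd_ofAdd, ZMod.val_natCast, P_pow_mod]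
      rw [← hz, ← h]
      exact hinv _ u
    have expand : ∀ u : Fin 4 → ℚ,
        eval u f = ∑ s ∈ f.support, (coeff s f) * (s.prod fun i e => u i ^ e) := by
      intro u
      conv_lhs => rw [f.as_sum]
      rw [map_sum]
      simp only [eval_monomial]
    have hS : eval vv0 f + eval vv1 f + eval vv2 f + eval vv3 f
        = eval ww0 f + eval ww1 f + eval ww2 f + eval ww3 f := by
      rw [expand vv0, expand vv1, expand vv2, expand vv3,
        expand ww0, expand ww1, expand ww2, expand ww3,
        ← Finset.sum_add_distrib, ← Finset.sum_add_distrib, ← Finset.sum_add_distrib,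
        ← Finset.sum_add_distrib, ← Finset.sum_add_distrib, ← Finset.sum_add_distrib]
      refine Finset.sum_congr rfl fun s hs => ?_
      exact keymono s ((le_totalDegree hs).trans hdeg) _
    have e1 : eval vv1 f = eval vv0 f := key 1 _ _ hv1
    have e2 : eval vv2 f = eval vv0 f := key 2 _ _ hv2
    have e3 : eval vv3 f = eval vv0 f := key 3 _ _ hv3
    have e4 : eval ww1 f = eval ww0 f := key 1 _ _ hw1
    have e5 : eval ww2 f = eval ww0 f := key 2 _ _ hw2
    have e6 : eval ww3 f = eval ww0 f := key 3 _ _ hw3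
    linarith
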